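/- Let a_1,…,a_n be distinct roots of a monic polynomial g of degree n over a field, all nonzero, and let T^{(1)}, …, T^{(n)} be doubly infinite sequences (T^{(i)}_m)_{m∈ℤ} each satisfying the linear recurrence with characteristic polynomial g (i.e., if g(x) = x^n − ∑_{s=0}^{n−1} e_s x^s then T^{(i)}_{m+n} = ∑_{s=0}^{n−1} e_s T^{(i)}_{m+s} for all m ∈ ℤ). Assume det(T^{(k)}_{l−1})_{1≤k,l≤n} ≠ 0. Then for any J = (j_1,…,j_n) ∈ ℤ^n, 𝔊_J(A) = det(T^{(k)}_{j_l + l − 1})_{1≤k,l≤n} / det(T^{(k)}_{l−1})_{1≤k,l≤n}. -/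

import Mathlib

open Polynomial Finset Matrix

lemma seq_zero_of_window {K : Type*} [Field K] {n : ℕ} (hn : 0 < n) (e : Fin n → K)
    (he0 : e ⟨0, hn⟩ ≠ 0) (S : ℤ → K)
    (hS : ∀ m : ℤ, S (m + n) = ∑ s : Fin n, e s * S (m + s))
    (hwin : ∀ l : Fin n, S l = 0) : ∀ m : ℤ, S m = 0 := by
  have key : ∀ m : ℤ, ∀ j : Fin n, S (m + j) = 0 := by
    intro m
    induction m using Int.induction_on with
    | zero => intro j; simpa using hwin j
    | succ m ih =>
      intro j
      by_cases hj : (j : ℕ) + 1 < n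
      · have := ih ⟨(j : ℕ) + 1, hj⟩
        have harg : (m : ℤ) + 1 + j = m + ((⟨(j : ℕ) + 1, hj⟩ : Fin n) : ℤ) := by
          push_cast; ring
        rw [harg]; exact this
      · have hj' : (j : ℕ) = n - 1 := by omega
        have harg : (m : ℤ) + 1 + j = m + n := by
          have : ((j : ℕ) : ℤ) = (n : ℤ) - 1 := by omega
          rw [this]; ring
        rw [harg, hS m]
        exact Finset.sum_eq_zero fun s _ => by rw [ih s, mul_zero]
    | pred m ih =>
      intro j
      by_cases hj : 0 < (j : ℕ)
      · have hlt : (j : ℕ) - 1 < n := by omega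
        have := ih ⟨(j : ℕ) - 1, hlt⟩
        have harg : -(m : ℤ) - 1 + j = -m + ((⟨(j : ℕ) - 1, hlt⟩ : Fin n) : ℤ) := by
          push_cast; omega
        rw [harg]; exact this
      · have hj0 : (j : ℕ) = 0 := by omega
        have hrec := hS (-(m : ℤ) - 1)
        have hL : S (-(m : ℤ) - 1 + n) = 0 := by
          have := ih ⟨n - 1, by omega⟩
          have harg : -(m : ℤ) - 1 + n = -m + ((⟨n - 1, by omega⟩ : Fin n) : ℤ) := by
            push_cast; omega
          rw [harg]; exact this
        have hz0 : (⟨0, hn⟩ : Fin n) ∈ Finset.univ := Finset.mem_univ _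
        rw [← Finset.add_sum_erase _ _ hz0] at hrec
        have hrest : ∑ s ∈ Finset.univ.erase (⟨0, hn⟩ : Fin n),
            e s * S (-(m : ℤ) - 1 + s) = 0 := by
          refine Finset.sum_eq_zero fun s hs => ?_
          have hs0 : (s : ℕ) ≠ 0 := by
            intro h
            exact (Finset.mem_erase.mp hs).1 (Fin.ext h)
          have hlt : (s : ℕ) - 1 < n := by omega
          have := ih ⟨(s : ℕ) - 1, hlt⟩
          have harg : -(m : ℤ) - 1 + s = -m + ((⟨(s : ℕ) - 1, hlt⟩ : Fin n) : ℤ) := by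
            push_cast; omega
          rw [harg, this, mul_zero]
        rw [hL, hrest, add_zero] at hrec
        have : S (-(m : ℤ) - 1 + (⟨0, hn⟩ : Fin n)) = 0 := by
          by_contra h
          exact he0 (by
            have := hrec.symm
            exact (mul_eq_zero.mp this).resolve_right h)
        have harg : -(m : ℤ) - 1 + j = -(m : ℤ) - 1 + ((⟨0, hn⟩ : Fin n) : ℤ) := by
          push_cast; omega
        rw [harg]; exact this
  intro m
  have := key m ⟨0, hn⟩
  simpa using this



/-- The generalized bialternant `𝔊_c(A) = det(aₜ^{c_s+s−1}) / det(aₜ^{s−1})`. -/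
noncomputable def genSchur {K : Type*} [Field K] {n : ℕ} (x : Fin n → K)
    (c : Fin n → ℤ) : K :=
  (Matrix.of fun s t : Fin n => x t ^ (c s + (s : ℤ))).det /
    (Matrix.of fun s t : Fin n => x t ^ ((s : ℕ) : ℤ)).det

/-- Hou–Mu: `𝔊_J(A)` as a ratio of determinants built from `n` recurrent sequences
sharing the characteristic polynomial `∏ (x − aᵢ)`. -/
theorem genSchur_of_recurrent_sequences {K : Type*} [Field K] {n : ℕ}
    (a : Fin n → K) (ha : Function.Injective a) (h0 : ∀ i, a i ≠ 0)
    (e : Fin n → K)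
    (he : (X : K[X]) ^ n - ∑ s : Fin n, C (e s) * X ^ (s : ℕ) =
      ∏ i, (X - C (a i)))
    (T : Fin n → ℤ → K)
    (hT : ∀ (i : Fin n) (m : ℤ), T i (m + n) = ∑ s : Fin n, e s * T i (m + s))
    (hdet : (Matrix.of fun k l : Fin n => T k (l : ℤ)).det ≠ 0)
    (J : Fin n → ℤ) :
    genSchur a J =
      (Matrix.of fun k l : Fin n => T k (J l + (l : ℤ))).det /
        (Matrix.of fun k l : Fin n => T k (l : ℤ)).det := by
  rcases Nat.eq_zero_or_pos n with hn | hn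
  · subst hn
    simp [genSchur, Matrix.det_isEmpty]
  -- e 0 ≠ 0 (constant term)
  have he0 : e ⟨0, hn⟩ ≠ 0 := by
    have hc := congrArg (Polynomial.eval (0 : K)) he
    simp only [eval_sub, eval_pow, eval_X, eval_finset_sum, eval_mul, eval_C,
      eval_prod] at hc
    rw [zero_pow hn.ne', Finset.sum_eq_single (⟨0, hn⟩ : Fin n)
      (fun s _ hs => by
        rw [zero_pow (fun h => hs (Fin.ext h)), mul_zero])
      (fun h => absurd (Finset.mem_univ _) h)] at hc
    simp only [Fin.val_mk, pow_zero, mul_one, zero_sub] at hc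
    intro h
    rw [h, neg_zero] at hc
    exact (Finset.prod_ne_zero_iff.mpr fun i _ => by
      simpa using neg_ne_zero.mpr (h0 i)) hc.symm
  -- each a i is a root
  have hroot : ∀ i, (a i) ^ n = ∑ s : Fin n, e s * a i ^ (s : ℕ) := by
    intro i
    have h := congrArg (Polynomial.eval (a i)) he
    simp only [eval_sub, eval_pow, eval_X, eval_finset_sum, eval_mul, eval_C,
      eval_prod] at h
    rw [Finset.prod_eq_zero (Finset.mem_univ i) (by simp)] at h
    exact sub_eq_zero.mp h
  -- geometric sequences satisfy the recurrence (zpow version)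
  have hgeo : ∀ (i : Fin n) (m : ℤ),
      a i ^ (m + n) = ∑ s : Fin n, e s * a i ^ (m + (s : ℤ)) := by
    intro i m
    rw [zpow_add₀ (h0 i), zpow_natCast, hroot i, Finset.mul_sum]
    refine Finset.sum_congr rfl fun s _ => ?_
    rw [zpow_add₀ (h0 i), zpow_natCast]
    ring
  -- Vandermonde setup
  set W : Matrix (Fin n) (Fin n) K := Matrix.of fun l j => a j ^ (l : ℕ) with hW
  have hWdet : W.det ≠ 0 := by
    have hWt : W = (Matrix.vandermonde a).transpose := by
      ext l j
      simp [hW, Matrix.vandermonde]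
    rw [hWt, Matrix.det_transpose, Matrix.det_vandermonde]
    refine Finset.prod_ne_zero_iff.mpr fun i _ => Finset.prod_ne_zero_iff.mpr fun j hj => ?_
    have hij : i < j := by simpa using hj
    exact sub_ne_zero_of_ne fun h => (Fin.ne_of_lt hij) (ha h.symm)
  have hWu : IsUnit W.det := isUnit_iff_ne_zero.mpr hWdet
  set c : Fin n → Fin n → K := fun k => W⁻¹ *ᵥ (fun l : Fin n => T k (l : ℤ)) with hc
  have hsolve : ∀ k, W *ᵥ c k = fun l : Fin n => T k (l : ℤ) := by
    intro k
    rw [hc, Matrix.mulVec_mulVec, Matrix.mul_nonsing_inv _ hWu, Matrix.one_mulVec]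
  set U : Fin n → ℤ → K := fun k m => ∑ j, c k j * a j ^ m with hU
  have hTU : ∀ k m, T k m = U k m := by
    intro k
    have hrecU : ∀ m : ℤ, U k (m + n) = ∑ s : Fin n, e s * U k (m + s) := by
      intro m
      simp only [hU]
      calc ∑ j, c k j * a j ^ (m + (n : ℤ))
          = ∑ j, ∑ s : Fin n, e s * (c k j * a j ^ (m + (s : ℤ))) := by
            refine Finset.sum_congr rfl fun j _ => ?_
            rw [hgeo j m, Finset.mul_sum]
            exact Finset.sum_congr rfl fun s _ => by ring
        _ = ∑ s : Fin n, e s * ∑ j, c k j * a j ^ (m + (s : ℤ)) := by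
            rw [Finset.sum_comm]
            exact Finset.sum_congr rfl fun s _ => by rw [Finset.mul_sum]
    have hwin : ∀ l : Fin n, T k (l : ℤ) - U k (l : ℤ) = 0 := by
      intro l
      have h1 : U k (l : ℤ) = (W *ᵥ c k) l := by
        simp only [hU, Matrix.mulVec, dotProduct, hW, Matrix.of_apply]
        refine Finset.sum_congr rfl fun j _ => ?_
        rw [mul_comm, zpow_natCast]
      rw [h1, hsolve k]
      ring
    have hrecS : ∀ m : ℤ, (fun m => T k m - U k m) (m + n) =
        ∑ s : Fin n, e s * (fun m => T k m - U k m) (m + s) := by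
      intro m
      simp only
      rw [hT k m, hrecU m, ← Finset.sum_sub_distrib]
      exact Finset.sum_congr rfl fun s _ => by ring
    have hz := seq_zero_of_window hn e he0 (fun m => T k m - U k m) hrecS hwin
    intro m
    have h := hz m
    simp only [sub_eq_zero] at h
    exact h
  -- factorization
  set Cm : Matrix (Fin n) (Fin n) K := Matrix.of fun k j => c k j with hCm
  have key : ∀ f : Fin n → ℤ,
      (Matrix.of fun k l : Fin n => T k (f l)).det =
        Cm.det * (Matrix.of fun j l : Fin n => a j ^ (f l)).det := by
    intro f
    rw [← Matrix.det_mul]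
    congr 1
    ext k l
    simp only [Matrix.mul_apply, Matrix.of_apply, hCm]
    rw [hTU k (f l)]
  have hkJ := key (fun l => J l + (l : ℤ))
  have hk0 := key (fun l => (l : ℤ))
  have hCdet : Cm.det ≠ 0 := fun h => hdet (by rw [hk0, h, zero_mul])
  rw [hkJ, hk0, mul_div_mul_left _ _ hCdet]
  unfold genSchur
  have hnum : (Matrix.of fun s t : Fin n => a t ^ (J s + (s : ℤ))).det =
      (Matrix.of fun j l : Fin n => a j ^ (J l + (l : ℤ))).det := by
    rw [← Matrix.det_transpose (Matrix.of fun j l : Fin n => a j ^ (J l + (l : ℤ)))]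
    congr 1
  have hden : (Matrix.of fun s t : Fin n => a t ^ (((s : ℕ) : ℤ))).det =
      (Matrix.of fun j l : Fin n => a j ^ ((l : ℤ))).det := by
    rw [← Matrix.det_transpose (Matrix.of fun j l : Fin n => a j ^ ((l : ℤ)))]
    congr 1
  rw [hnum, hden]
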